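/- Let p, q be coprime integers with q ≥ 1, and let α ∈ ℝ. Let m₁ < m₂ < ⋯ < m_r be the admissible indices in {0,…,q−1} (one has r = q if q is odd and r = q/2 if q is even). For each admissible n set A_n = cos α · I₂ + i sin α · M(θ_n), a 2×2 complex matrix. Then (1/2)·Tr(A_{m_r} A_{m_{r−1}} ⋯ A_{m_1}) = (cos α)^q if q is odd, and (1/2)·Tr(A_{m_r} A_{m_{r−1}} ⋯ A_{m_1}) = (cos α)^{q/2} if q is even. -/

import Mathlib

open scoped Classical

/-- The generalized quadratic Gauss sum `G(-p, n, q) = ∑_{k=0}^{q-1} e(( -p k² + n k)/q)`. -/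
noncomputable def Gm (p : ℤ) (q : ℕ) (n : ℤ) : ℂ :=
  ∑ k ∈ Finset.range q,
    Complex.exp (2 * Real.pi * Complex.I *
      ((-(p : ℂ) * (k : ℂ) ^ 2 + (n : ℂ) * (k : ℂ)) / (q : ℂ)))

/-- `θ_n`, the argument of `G(-p, n, q)`. -/
noncomputable def theta (p : ℤ) (q : ℕ) (n : ℕ) : ℝ := (Gm p q (n : ℤ)).arg

/-- `n` is admissible when `4 ∤ (2n + 2 - q)`. -/
def Adm (q n : ℕ) : Prop := ¬ ((4 : ℤ) ∣ (2 * (n : ℤ) + 2 - (q : ℤ)))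

/-- The 2×2 matrix with zero diagonal, top-right entry `e^{-iφ}`, bottom-left entry `e^{iφ}`. -/
noncomputable def Mmat (φ : ℝ) : Matrix (Fin 2) (Fin 2) ℂ :=
  !![0, Complex.exp (-(φ : ℂ) * Complex.I); Complex.exp ((φ : ℂ) * Complex.I), 0]

/-- The admissible indices in `{0, …, q-1}` listed in increasing order. -/
noncomputable def admList (q : ℕ) : List ℕ := (List.range q).filter (fun n => Adm q n)


/-! ### Auxiliary development -/

open scoped Classical

noncomputable section

open Complex Matrix

abbrev Mat2 := Matrix (Fin 2) (Fin 2) ℂ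

/-- `WW q a = e^{2πi a/q}`. -/
noncomputable def WW (q : ℕ) (a : ℤ) : ℂ := Complex.exp (2 * Real.pi * Complex.I * a / q)

lemma WW_zero (q : ℕ) : WW q 0 = 1 := by simp [WW]

lemma WW_add (q : ℕ) (a b : ℤ) : WW q (a + b) = WW q a * WW q b := by
  rw [WW, WW, WW, ← Complex.exp_add]
  congr 1
  push_cast
  ring

lemma WW_ne_zero (q : ℕ) (a : ℤ) : WW q a ≠ 0 := Complex.exp_ne_zero _

lemma WW_inv (q : ℕ) (a : ℤ) : (WW q a)⁻¹ = WW q (-a) := by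
  rw [WW, WW, ← Complex.exp_neg]
  congr 1
  push_cast
  ring

lemma WW_pow (q : ℕ) (a : ℤ) (m : ℕ) : (WW q a) ^ m = WW q (a * m) := by
  induction m with
  | zero => simp [WW_zero]
  | succ m ih =>
    rw [pow_succ, ih, ← WW_add]
    congr 1
    push_cast
    ring

lemma WW_eq_one_iff (q : ℕ) (hq : 1 ≤ q) (a : ℤ) : WW q a = 1 ↔ (q : ℤ) ∣ a := by
  have hq0 : (q : ℂ) ≠ 0 := by
    have : q ≠ 0 := by omega
    exact_mod_cast Nat.cast_ne_zero.mpr this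
  rw [WW, Complex.exp_eq_one_iff]
  constructor
  · rintro ⟨n, hn⟩
    have hπ : (Real.pi : ℂ) ≠ 0 := by
      simpa using Real.pi_ne_zero
    have h2 : (2 : ℂ) ≠ 0 := two_ne_zero
    have hI : (Complex.I : ℂ) ≠ 0 := Complex.I_ne_zero
    have key : (2 * Real.pi * Complex.I) * (a : ℂ) = (2 * Real.pi * Complex.I) * ((n * q : ℤ) : ℂ) := by
      field_simp at hn
      push_cast
      rw [hn]
      ring
    have : (a : ℂ) = ((n * q : ℤ) : ℂ) :=
      mul_left_cancel₀ (mul_ne_zero (mul_ne_zero h2 hπ) hI) key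
    have ha : a = n * q := by exact_mod_cast this
    exact ⟨n, by rw [ha, mul_comm]⟩
  · rintro ⟨n, hn⟩
    refine ⟨n, ?_⟩
    rw [hn]
    push_cast
    field_simp

lemma WW_congr (q : ℕ) (hq : 1 ≤ q) (a b : ℤ) (h : (q : ℤ) ∣ a - b) : WW q a = WW q b := by
  have : WW q (a - b) = 1 := (WW_eq_one_iff q hq _).mpr h
  have h2 := WW_add q (a - b) b
  rw [sub_add_cancel] at h2
  rw [h2, this, one_mul]


lemma WW_abs (q : ℕ) (a : ℤ) : ‖WW q a‖ = 1 := by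
  rw [WW, Complex.norm_exp]
  have : (2 * Real.pi * Complex.I * a / q) = ((2 * Real.pi * a / q : ℝ) : ℂ) * Complex.I := by
    push_cast; ring
  rw [this]
  simp [Complex.mul_I_re]








/-- The matrix `!![0, u⁻¹; u, 0]`. -/
def Mc (u : ℂ) : Mat2 := !![0, u⁻¹; u, 0]

/-- Alternating product. -/
def dalt : List ℂ → ℂ
  | [] => 1
  | u :: l => (u * dalt l)⁻¹

@[simp] lemma dalt_nil : dalt [] = 1 := rfl
@[simp] lemma dalt_cons (u : ℂ) (l : List ℂ) : dalt (u :: l) = (u * dalt l)⁻¹ := rfl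

lemma prod_Mc (L : List ℂ) :
    (L.map Mc).prod = if Even L.length then !![dalt L, 0; 0, (dalt L)⁻¹]
      else !![0, dalt L; (dalt L)⁻¹, 0] := by
  induction L with
  | nil => simp [Matrix.one_fin_two]
  | cons u l ih =>
    rcases Nat.even_or_odd l.length with he | ho
    · have hne : ¬ Even (u :: l).length := by simp [Nat.even_add_one, he]
      simp only [List.map_cons, List.prod_cons, ih, if_pos he, if_neg hne, dalt_cons]
      rw [Mc, Matrix.mul_fin_two]
      norm_num [mul_inv, inv_inv, mul_comm]
    · have hne : Even (u :: l).length := by simp [Nat.even_add_one, Nat.not_even_iff_odd, ho]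
      simp only [List.map_cons, List.prod_cons, ih, if_neg (Nat.not_even_iff_odd.mpr ho),
        if_pos hne, dalt_cons]
      rw [Mc, Matrix.mul_fin_two]
      norm_num [mul_inv, inv_inv, mul_comm]

/-- Expansion of the product of `x•1 + y•Mc u` over a list into sublists. -/
lemma expand_prod (x y : ℂ) (L : List ℂ) :
    (L.map (fun u => x • (1 : Mat2) + y • Mc u)).prod
      = (L.sublists'.map (fun S =>
          (x ^ (L.length - S.length) * y ^ S.length) • (S.map Mc).prod)).sum := by
  induction L with
  | nil => simp
  | cons u l ih =>
    rw [List.map_cons, List.prod_cons, ih, List.sublists'_cons, List.map_append, List.sum_append]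
    rw [add_mul, smul_mul_assoc, one_mul, smul_mul_assoc]
    congr 1
    · -- x • (sum over sublists of l) = sum with exponent bumped
      rw [List.smul_sum, List.map_map]
      refine congrArg List.sum ?_
      apply List.map_congr_left
      intro S hS
      have hle : S.length ≤ l.length := (List.mem_sublists'.mp hS).length_le
      simp only [Function.comp_apply, smul_smul]
      congr 1
      rw [List.length_cons]
      rw [show l.length + 1 - S.length = (l.length - S.length) + 1 by omega]
      ring
    · -- y • (Mc u * sum)
      rw [List.map_map]
      have : (Mc u) * (List.map (fun S => (x ^ (l.length - S.length) * y ^ S.length) • (S.map Mc).prod) l.sublists').sum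
          = (List.map (fun S => (x ^ (l.length - S.length) * y ^ S.length) • (Mc u * (S.map Mc).prod)) l.sublists').sum := by
        induction l.sublists' with
        | nil => simp
        | cons a t iht => simp [mul_add, iht, Matrix.mul_smul]
      rw [this, List.smul_sum, List.map_map]
      refine congrArg List.sum ?_
      apply List.map_congr_left
      intro S hS
      have hle : S.length ≤ l.length := (List.mem_sublists'.mp hS).length_le
      simp only [Function.comp_apply, smul_smul, List.map_cons, List.prod_cons, List.length_cons]
      congr 1
      rw [show l.length + 1 - (S.length + 1) = l.length - S.length by omega]
      ring

/-- Alternating sum of a list of naturals. -/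
def asum : List ℕ → ℤ
  | [] => 0
  | m :: l => (m : ℤ) - asum l

@[simp] lemma asum_nil : asum [] = 0 := rfl
@[simp] lemma asum_cons (m : ℕ) (l : List ℕ) : asum (m :: l) = (m : ℤ) - asum l := rfl

lemma asum_bounds : ∀ (N : ℕ) (l : List ℕ), l.length ≤ N → l.Pairwise (· > ·) → Even l.length →
    (0 ≤ asum l) ∧ (l ≠ [] → 1 ≤ asum l ∧ asum l ≤ (l.headI : ℤ)) := by
  intro N
  induction N with
  | zero =>
    intro l hl _ _
    have : l = [] := List.length_eq_zero_iff.mp (Nat.le_zero.mp hl)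
    subst this
    exact ⟨le_refl 0, fun h => absurd rfl h⟩
  | succ N ihN =>
    intro l hl hp he
    match l with
    | [] => exact ⟨le_refl 0, fun h => absurd rfl h⟩
    | [a] => simp at he
    | a :: b :: l' =>
      have hab : a > b := by
        have := (List.pairwise_cons.mp hp).1
        exact this b (by simp)
      have hp' : l'.Pairwise (· > ·) := ((List.pairwise_cons.mp (List.pairwise_cons.mp hp).2).2)
      have hbl' : ∀ x ∈ l', b > x := (List.pairwise_cons.mp (List.pairwise_cons.mp hp).2).1
      have he' : Even l'.length := by
        simp only [List.length_cons] at he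
        rcases he with ⟨k, hk⟩
        exact ⟨k - 1, by omega⟩
      have hlen' : l'.length ≤ N := by
        simp only [List.length_cons] at hl
        omega
      have IH := ihN l' hlen' hp' he'
      rcases l' with _ | ⟨c, t⟩
      · simp only [asum_cons, asum_nil, List.headI]
        constructor
        · push_cast; omega
        · intro _
          constructor <;> [push_cast; push_cast] <;> omega
      · have hcb : c < b := hbl' c (by simp)
        have h1 := IH.2 (by simp)
        simp only [List.headI] at h1
        simp only [asum_cons, List.headI]
        have hc : (c : ℤ) < (b : ℤ) := by exact_mod_cast hcb
        have hab' : (b : ℤ) < (a : ℤ) := by exact_mod_cast hab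
        have hct : asum (c :: t) = (c : ℤ) - asum t := rfl
        constructor
        · omega
        · intro _
          omega
end

lemma dalt_map_mul (f g : ℕ → ℂ) (S : List ℕ) :
    dalt (S.map fun m => f m * g m) = dalt (S.map f) * dalt (S.map g) := by
  induction S with
  | nil => simp
  | cons a S ih =>
    simp only [List.map_cons, dalt_cons, ih, mul_inv]
    ring

lemma dalt_map_WW (q : ℕ) (c : ℤ) (S : List ℕ) :
    dalt (S.map fun m : ℕ => WW q (c * (m : ℤ))) = WW q (-(c * asum S)) := by
  induction S with
  | nil => simp [WW_zero]
  | cons a S ih =>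
    simp only [List.map_cons, dalt_cons, ih, asum_cons, ← WW_add, WW_inv]
    congr 1
    push_cast
    ring

lemma dalt_const_inv (S : List ℕ) (f : ℕ → ℂ) :
    (dalt (S.map f))⁻¹ = dalt (S.map fun m => (f m)⁻¹) := by
  induction S with
  | nil => simp
  | cons a S ih =>
    simp only [List.map_cons, dalt_cons, mul_inv, inv_inv, ← ih]

/-- Geometric sum of `WW`-powers. -/
lemma geom_WW (q : ℕ) (hq : 1 ≤ q) (r : ℕ) (a : ℤ) (hr : (q : ℤ) ∣ a * r) (ha : ¬ (q : ℤ) ∣ a) :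
    ∑ t ∈ Finset.range r, (WW q a) ^ t = 0 := by
  have hne : WW q a ≠ 1 := fun h => ha ((WW_eq_one_iff q hq a).mp h)
  rw [geom_sum_eq hne]
  have : (WW q a) ^ r = 1 := by
    rw [WW_pow]
    exact (WW_eq_one_iff q hq _).mpr hr
  rw [this, sub_self, zero_div]

lemma range_shift_rotate (r t : ℕ) (ht : t < r) :
    (List.range r).reverse.map (fun m => (m + t) % r)
      = ((List.range r).reverse).rotate (r - t) := by
  apply List.ext_getElem
  · simp
  · intro i h1 h2
    simp only [List.getElem_map, List.getElem_reverse, List.getElem_range, List.getElem_rotate]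
    simp only [List.length_map, List.length_reverse, List.length_range] at h1 h2 ⊢
    have h1' : i < r := by simpa using h1
    rcases Nat.lt_or_ge i t with hit | hit
    · have hj : (i + (r - t)) % r = i + r - t := by
        have h3 : i + (r - t) = i + r - t := by omega
        rw [h3, Nat.mod_eq_of_lt (by omega)]
      have hl : (r - 1 - i + t) % r = t - 1 - i := by
        have h4 : r - 1 - i + t = (t - 1 - i) + r := by omega
        rw [h4, Nat.add_mod_right, Nat.mod_eq_of_lt (by omega)]
      omega
    · have hj : (i + (r - t)) % r = i - t := by
        have h3 : i + (r - t) = (i - t) + r := by omega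
        rw [h3, Nat.add_mod_right, Nat.mod_eq_of_lt (by omega)]
      have hl : (r - 1 - i + t) % r = r - 1 - i + t := Nat.mod_eq_of_lt (by omega)
      omega

lemma trace_prod_rotate (l : List Mat2) (n : ℕ) :
    Matrix.trace ((l.rotate n).prod) = Matrix.trace l.prod := by
  rw [List.rotate_eq_drop_append_take_mod, List.prod_append, Matrix.trace_mul_comm,
    ← List.prod_append, List.take_append_drop]

lemma Fmat_eq (x y u : ℂ) : x • (1 : Mat2) + y • Mc u = !![x, y * u⁻¹; y * u, x] := by
  ext i j
  fin_cases i <;> fin_cases j <;> simp [Mc, Matrix.one_apply]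

lemma Fmat_conj (x y u v : ℂ) (hv : v ≠ 0) :
    x • (1 : Mat2) + y • Mc (u * v)
      = !![1, 0; 0, v] * (x • (1 : Mat2) + y • Mc u) * !![1, 0; 0, v⁻¹] := by
  rw [Fmat_eq, Fmat_eq, Matrix.mul_fin_two, Matrix.mul_fin_two]
  ext i j
  fin_cases i <;> fin_cases j <;> simp <;> field_simp <;> ring

lemma prod_conj (D E : Mat2) (hED : E * D = 1) (g : ℕ → Mat2)
    (l : List ℕ) (f : ℕ → Mat2) (h : ∀ m ∈ l, f m = D * g m * E) :
    (l.map f).prod = D * (l.map g).prod * E := by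
  have hDE : D * E = 1 := mul_eq_one_comm.mp hED
  induction l with
  | nil =>
    simp only [List.map_nil, List.prod_nil, Matrix.mul_one, hDE]
  | cons a l ih =>
    simp only [List.map_cons, List.prod_cons]
    rw [h a (by simp), ih (fun m hm => h m (by simp [hm]))]
    simp only [Matrix.mul_assoc]
    rw [show E * (D * ((List.map g l).prod * E)) = (List.map g l).prod * E from by
      rw [← Matrix.mul_assoc, hED, Matrix.one_mul]]

lemma list_finset_swap {α : Type*} (F : Finset ℕ) (l : List α) (f : ℕ → α → ℂ) :
    ∑ t ∈ F, (l.map (f t)).sum = (l.map (fun a => ∑ t ∈ F, f t a)).sum := by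
  induction l with
  | nil => simp
  | cons a l ih => simp [Finset.sum_add_distrib, ih]

lemma sum_map_single {α : Type*} [DecidableEq α] (l : List α) (f : α → ℂ) (b : α)
    (hb : b ∈ l) (hnd : l.Nodup) (h : ∀ a ∈ l, a ≠ b → f a = 0) :
    (l.map f).sum = f b := by
  induction l with
  | nil => simp at hb
  | cons a l ih =>
    rcases List.mem_cons.mp hb with rfl | hb'
    · simp only [List.map_cons, List.sum_cons]
      have : ∀ c ∈ l, f c = 0 := by
        intro c hc
        have hcb : c ≠ b := by
          intro hcb; subst hcb
          exact (List.nodup_cons.mp hnd).1 hc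
        exact h c (by simp [hc]) hcb
      have : (l.map f).sum = 0 := by
        rw [List.sum_eq_zero]
        intro x hx
        rcases List.mem_map.mp hx with ⟨c, hc, rfl⟩
        exact this c hc
      rw [this, add_zero]
    · simp only [List.map_cons, List.sum_cons]
      have ha : f a = 0 := h a (by simp) (by rintro rfl; exact (List.nodup_cons.mp hnd).1 hb')
      rw [ha, zero_add]
      exact ih hb' (List.nodup_cons.mp hnd).2 (fun c hc => h c (by simp [hc]))

lemma main_trace (q r : ℕ) (hq : 1 ≤ q) (hr : 1 ≤ r) (A B : ℤ) (z₀ : ℂ)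
    (h1 : (q:ℤ) ∣ 2*A*r) (h2 : (q:ℤ) ∣ A*r^2 + B*r)
    (hnd : ∀ L : ℤ, 1 ≤ L → L ≤ (r:ℤ) - 1 → ¬ (q:ℤ) ∣ 2*A*L)
    (x y : ℂ) :
    Matrix.trace (((List.range r).reverse.map
      (fun m : ℕ => x • (1 : Mat2) + y • Mc (WW q (A*(m:ℤ)^2+B*(m:ℤ)) * z₀))).prod)
      = 2 * x ^ r := by
  set u : ℕ → ℂ := fun m => WW q (A*(m:ℤ)^2+B*(m:ℤ)) * z₀ with hu
  set pl : List ℕ := (List.range r).reverse with hpl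
  set T : ℕ → ℂ := fun t => Matrix.trace ((pl.map
      (fun m : ℕ => x • (1 : Mat2) + y • Mc (u m * WW q (2*A*(t:ℤ)) ^ m))).prod) with hT
  have hplen : pl.length = r := by rw [hpl]; simp
  have hT0 : T 0 = Matrix.trace ((pl.map
      (fun m : ℕ => x • (1 : Mat2) + y • Mc (u m))).prod) := by
    simp only [hT, Nat.cast_zero, mul_zero, WW_zero, one_pow, mul_one]
  -- Step A : shift invariance
  have stepA : ∀ t, t < r → T t = T 0 := by
    intro t ht
    have key : ∀ m : ℕ, u m * WW q (2*A*(t:ℤ)) ^ m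
        = u ((m + t) % r) * WW q (-(A*(t:ℤ)^2 + B*(t:ℤ))) := by
      intro m
      set x0 : ℕ := (m + t) % r with hx0
      have hdvd : (q:ℤ) ∣ (A*(m:ℤ)^2 + B*(m:ℤ) + 2*A*(t:ℤ)*(m:ℤ))
          - (A*(x0:ℤ)^2 + B*(x0:ℤ) + -(A*(t:ℤ)^2+B*(t:ℤ))) := by
        have hdm := Nat.div_add_mod (m + t) r
        set s : ℕ := (m + t) / r with hsdef
        have hmt : (m:ℤ) + (t:ℤ) = (r:ℤ)*(s:ℤ) + (x0:ℤ) := by exact_mod_cast hdm.symm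
        obtain ⟨e, he⟩ := Int.even_mul_succ_self ((s:ℤ) - 1)
        have heq : (A*(m:ℤ)^2 + B*(m:ℤ) + 2*A*(t:ℤ)*(m:ℤ))
            - (A*(x0:ℤ)^2 + B*(x0:ℤ) + -(A*(t:ℤ)^2+B*(t:ℤ)))
            = (2*A*(r:ℤ))*((x0:ℤ)*(s:ℤ)) + (A*(r:ℤ)^2+B*(r:ℤ))*(s:ℤ)
              + (2*A*(r:ℤ))*((r:ℤ)*e) := by
          linear_combination (A*((m:ℤ)+(t:ℤ)+(x0:ℤ)+(r:ℤ)*(s:ℤ)) + B) * hmt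
            + (A*(r:ℤ)^2) * he
        rw [heq]
        push_cast at h1 h2 ⊢
        exact dvd_add (dvd_add (h1.mul_right _) (h2.mul_right _)) (h1.mul_right _)
      have e1 : u m * WW q (2*A*(t:ℤ)) ^ m
          = WW q (A*(m:ℤ)^2+B*(m:ℤ) + 2*A*(t:ℤ)*(m:ℤ)) * z₀ := by
        rw [WW_add q (A*(m:ℤ)^2+B*(m:ℤ)) (2*A*(t:ℤ)*(m:ℤ)), WW_pow]
        simp only [hu]
        ring
      have e2 : u x0 * WW q (-(A*(t:ℤ)^2+B*(t:ℤ)))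
          = WW q (A*(x0:ℤ)^2+B*(x0:ℤ) + -(A*(t:ℤ)^2+B*(t:ℤ))) * z₀ := by
        rw [WW_add q (A*(x0:ℤ)^2+B*(x0:ℤ)) (-(A*(t:ℤ)^2+B*(t:ℤ)))]
        simp only [hu]
        ring
      rw [e1, e2, WW_congr q hq _ _ hdvd]
    have hfun : (fun m : ℕ => x • (1:Mat2) + y • Mc (u m * WW q (2*A*(t:ℤ)) ^ m))
        = fun m : ℕ => x • (1:Mat2) + y • Mc (u ((m+t) % r) * WW q (-(A*(t:ℤ)^2+B*(t:ℤ)))) := by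
      funext m; rw [key m]
    set v : ℂ := WW q (-(A*(t:ℤ)^2+B*(t:ℤ))) with hv
    have hvne : v ≠ 0 := WW_ne_zero q _
    have hED : (!![1,0;0,v⁻¹] : Mat2) * !![1,0;0,v] = 1 := by
      rw [Matrix.mul_fin_two, Matrix.one_fin_two]
      norm_num [inv_mul_cancel₀ hvne]
    have hconj : ∀ m ∈ pl, x • (1:Mat2) + y • Mc (u ((m+t)%r) * v)
        = !![1,0;0,v] * (x • (1:Mat2) + y • Mc (u ((m+t)%r))) * !![1,0;0,v⁻¹] :=
      fun m _ => Fmat_conj x y _ v hvne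
    rw [hT0]
    show Matrix.trace ((pl.map
        (fun m : ℕ => x • (1 : Mat2) + y • Mc (u m * WW q (2*A*(t:ℤ)) ^ m))).prod) = _
    rw [hfun, prod_conj _ _ hED (fun m => x • (1:Mat2) + y • Mc (u ((m+t)%r))) pl _ hconj]
    rw [Matrix.trace_mul_comm, ← Matrix.mul_assoc, hED, Matrix.one_mul]
    rw [show (fun m : ℕ => x • (1:Mat2) + y • Mc (u ((m+t)%r)))
        = (fun m : ℕ => x • (1:Mat2) + y • Mc (u m)) ∘ (fun m : ℕ => (m+t)%r) from rfl]
    rw [← List.map_map, hpl, range_shift_rotate r t ht, List.map_rotate, trace_prod_rotate]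
  -- Step B : the averaged sum
  have hppw : pl.Pairwise (· > ·) := by
    rw [hpl, List.pairwise_reverse]
    exact List.pairwise_lt_range
  have hplnd : pl.Nodup := by rw [hpl, List.nodup_reverse]; exact List.nodup_range
  have hmemr : ∀ m ∈ pl, m < r := by
    intro m hm; rw [hpl, List.mem_reverse, List.mem_range] at hm; exact hm
  have hTt : ∀ t : ℕ, T t = (pl.sublists'.map (fun S =>
      x ^ (r - S.length) * y ^ S.length *
        Matrix.trace ((S.map (fun m => Mc (u m * WW q (2*A*(t:ℤ)) ^ m))).prod))).sum := by
    intro t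
    rw [hT]
    simp only []
    rw [show (pl.map (fun m : ℕ => x • (1:Mat2) + y • Mc (u m * WW q (2*A*(t:ℤ)) ^ m)))
        = ((pl.map (fun m => u m * WW q (2*A*(t:ℤ)) ^ m)).map
            (fun c => x • (1:Mat2) + y • Mc c)) from by rw [List.map_map]; rfl]
    rw [expand_prod, Matrix.trace_list_sum, List.map_map, List.sublists'_map, List.map_map]
    refine congrArg List.sum (List.map_congr_left ?_)
    intro S hS
    simp only [Function.comp_apply]
    rw [Matrix.trace_smul, List.length_map, List.length_map, List.map_map, smul_eq_mul, hplen]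
    simp only [Function.comp_def]
  have tr_even : ∀ (t : ℕ), ∀ S : List ℕ, Even S.length →
      Matrix.trace ((S.map (fun m => Mc (u m * WW q (2*A*(t:ℤ)) ^ m))).prod)
        = dalt (S.map u) * (WW q (-(2*A*asum S))) ^ t
          + (dalt (S.map u))⁻¹ * (WW q (2*A*asum S)) ^ t := by
    intro t S hev
    rw [show (S.map (fun m => Mc (u m * WW q (2*A*(t:ℤ)) ^ m)))
        = ((S.map (fun m => u m * WW q (2*A*(t:ℤ)) ^ m)).map Mc) from by rw [List.map_map]; rfl]
    rw [prod_Mc, List.length_map, if_pos hev, Matrix.trace_fin_two_of]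
    rw [show (S.map (fun m => u m * WW q (2*A*(t:ℤ)) ^ m))
        = S.map (fun m : ℕ => u m * WW q ((2*A*(t:ℤ))*(m:ℤ))) from
      List.map_congr_left (fun m _ => by rw [WW_pow])]
    rw [dalt_map_mul u (fun m : ℕ => WW q ((2*A*(t:ℤ))*(m:ℤ))) S, dalt_map_WW]
    rw [mul_inv, WW_inv, neg_neg, WW_pow, WW_pow]
    rw [show -(2*A*asum S)*(t:ℤ) = -(2*A*(t:ℤ)*asum S) from by ring,
        show (2*A*asum S)*(t:ℤ) = 2*A*(t:ℤ)*asum S from by ring]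
  have sumT : ∑ t ∈ Finset.range r, T t = 2 * r * x ^ r := by
    rw [Finset.sum_congr rfl (fun t _ => hTt t), list_finset_swap]
    rw [sum_map_single _ _ ([] : List ℕ)
      (List.mem_sublists'.mpr (List.nil_sublist pl))
      (List.nodup_sublists'.mpr hplnd)]
    · simp [Matrix.trace_one, Finset.sum_const, Finset.card_range]
      ring
    · intro S hS hSne
      have hsub : S.Sublist pl := List.mem_sublists'.mp hS
      rcases Nat.even_or_odd S.length with hev | hod
      · -- even nonempty : geometric cancellation
        have hpS : S.Pairwise (· > ·) := hppw.sublist hsub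
        have hbounds := asum_bounds S.length S (le_refl _) hpS hev
        have hSheadlt : S.headI < r := by
          obtain ⟨a, S', rfl⟩ := List.exists_cons_of_ne_nil hSne
          exact hmemr _ (hsub.subset (by simp))
        have hL1 : 1 ≤ asum S := (hbounds.2 hSne).1
        have hL2 : asum S ≤ (r:ℤ) - 1 := by
          have h5 := (hbounds.2 hSne).2
          have h6 : (S.headI : ℤ) < (r:ℤ) := by exact_mod_cast hSheadlt
          omega
        rw [Finset.sum_congr rfl (fun t _ => by rw [tr_even t S hev])]
        have hg1 : ∑ t ∈ Finset.range r, (WW q (-(2*A*asum S))) ^ t = 0 := by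
          apply geom_WW q hq r _ ?_ ?_
          · rw [show (-(2*A*asum S))*(r:ℤ) = (2*A*(r:ℤ))*(-(asum S)) from by ring]
            exact h1.mul_right _
          · rw [dvd_neg]
            exact hnd (asum S) hL1 hL2
        have hg2 : ∑ t ∈ Finset.range r, (WW q (2*A*asum S)) ^ t = 0 := by
          apply geom_WW q hq r _ ?_ ?_
          · rw [show ((2*A*asum S))*(r:ℤ) = (2*A*(r:ℤ))*(asum S) from by ring]
            exact h1.mul_right _
          · exact hnd (asum S) hL1 hL2
        calc ∑ t ∈ Finset.range r, x ^ (r - S.length) * y ^ S.length *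
              (dalt (S.map u) * (WW q (-(2*A*asum S))) ^ t
                + (dalt (S.map u))⁻¹ * (WW q (2*A*asum S)) ^ t)
            = x ^ (r - S.length) * y ^ S.length *
              (dalt (S.map u) * ∑ t ∈ Finset.range r, (WW q (-(2*A*asum S))) ^ t
                + (dalt (S.map u))⁻¹ * ∑ t ∈ Finset.range r, (WW q (2*A*asum S)) ^ t) := by
              rw [Finset.mul_sum, Finset.mul_sum, ← Finset.sum_add_distrib, Finset.mul_sum]
          _ = 0 := by rw [hg1, hg2]; ring
      · -- odd : trace vanishes
        apply Finset.sum_eq_zero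
        intro t _
        rw [show (S.map (fun m => Mc (u m * WW q (2*A*(t:ℤ)) ^ m)))
            = ((S.map (fun m => u m * WW q (2*A*(t:ℤ)) ^ m)).map Mc) from by rw [List.map_map]; rfl]
        rw [prod_Mc, List.length_map, if_neg (Nat.not_even_iff_odd.mpr hod),
          Matrix.trace_fin_two_of]
        ring
  -- Step C : conclude
  have hsum0 : ∑ t ∈ Finset.range r, T t = (r:ℂ) * T 0 := by
    rw [Finset.sum_congr rfl (fun t ht => stepA t (Finset.mem_range.mp ht))]
    simp [Finset.sum_const, Finset.card_range, nsmul_eq_mul]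
  have hr0 : (r:ℂ) ≠ 0 := Nat.cast_ne_zero.mpr (by omega)
  have hfinal : T 0 = 2 * x ^ r := by
    have h := sumT
    rw [hsum0] at h
    have : (r:ℂ) * T 0 = (r:ℂ) * (2 * x ^ r) := by rw [h]; ring
    exact mul_left_cancel₀ hr0 this
  rw [hT0] at hfinal
  exact hfinal

/-! ### Gauss sum lemmas -/

lemma Gm_eq_sum_WW (p : ℤ) (q : ℕ) (n : ℤ) :
    Gm p q n = ∑ k ∈ Finset.range q, WW q (-p*(k:ℤ)^2 + n*(k:ℤ)) := by
  unfold Gm WW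
  refine Finset.sum_congr rfl fun k _ => ?_
  congr 1
  push_cast
  ring

lemma Gm_periodic (p : ℤ) (q : ℕ) (hq : 1 ≤ q) (n s : ℤ) : Gm p q (n + q*s) = Gm p q n := by
  rw [Gm_eq_sum_WW, Gm_eq_sum_WW]
  refine Finset.sum_congr rfl fun k _ => ?_
  apply WW_congr q hq
  exact ⟨s*k, by ring⟩

lemma sum_shift_one (q : ℕ) (f : ℕ → ℂ) (hf : f q = f 0) :
    ∑ k ∈ Finset.range q, f (k+1) = ∑ k ∈ Finset.range q, f k := by
  have h := Finset.sum_range_succ' f q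
  rw [Finset.sum_range_succ f q, hf] at h
  exact add_right_cancel h.symm

lemma sum_shift (q : ℕ) (f : ℕ → ℂ) (hf : ∀ k, f (k + q) = f k) (l : ℕ) :
    ∑ k ∈ Finset.range q, f (k + l) = ∑ k ∈ Finset.range q, f k := by
  induction l with
  | zero => simp
  | succ l ih =>
    calc ∑ k ∈ Finset.range q, f (k + (l+1))
        = ∑ k ∈ Finset.range q, (fun k => f (k + l)) (k+1) :=
          Finset.sum_congr rfl fun k _ => congrArg f (by omega)
      _ = ∑ k ∈ Finset.range q, f (k + l) := by
          apply sum_shift_one q (fun k => f (k+l))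
          show f (q + l) = f (0 + l)
          rw [show q + l = (0 + l) + q from by omega, hf]
      _ = _ := ih

lemma Gm_rec (p : ℤ) (q : ℕ) (hq : 1 ≤ q) (n : ℤ) :
    Gm p q n = WW q (n - p) * Gm p q (n - 2*p) := by
  rw [Gm_eq_sum_WW, Gm_eq_sum_WW, Finset.mul_sum]
  have hper : ∀ k : ℕ, (fun k : ℕ => WW q (-p*(k:ℤ)^2 + n*(k:ℤ))) (k + q)
      = (fun k : ℕ => WW q (-p*(k:ℤ)^2 + n*(k:ℤ))) k := by
    intro k
    apply WW_congr q hq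
    push_cast
    exact ⟨-p*(2*k+q) + n, by ring⟩
  have h1 := sum_shift q (fun k : ℕ => WW q (-p*(k:ℤ)^2 + n*(k:ℤ))) hper 1
  rw [← h1]
  refine Finset.sum_congr rfl fun k _ => ?_
  rw [← WW_add]
  exact congrArg (WW q) (by push_cast; ring)

lemma Gm_phase (p : ℤ) (q : ℕ) (hq : 1 ≤ q) (n₀ : ℤ) (j : ℕ) :
    Gm p q (n₀ + 2*p*(j:ℤ)) = WW q ((j:ℤ)*n₀ + p*(j:ℤ)^2) * Gm p q n₀ := by
  induction j with
  | zero => simp [WW_zero]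
  | succ j ih =>
    have h := Gm_rec p q hq (n₀ + 2*p*((j:ℤ)+1))
    rw [show (n₀ + 2*p*((j:ℤ)+1)) - 2*p = n₀ + 2*p*(j:ℤ) from by ring] at h
    rw [show ((j+1 : ℕ):ℤ) = (j:ℤ)+1 from by push_cast; ring, h, ih, ← mul_assoc, ← WW_add]
    exact congrArg (· * Gm p q n₀) (congrArg (WW q) (by ring))

lemma conj_WW (q : ℕ) (a : ℤ) : (starRingEnd ℂ) (WW q a) = WW q (-a) := by
  rw [WW, WW, ← Complex.exp_conj]
  congr 1
  simp only [map_div₀, map_mul, Complex.conj_I, Complex.conj_ofReal, map_ofNat,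
    map_intCast, map_natCast]
  push_cast
  ring

lemma geom_full (q : ℕ) (hq : 1 ≤ q) (a : ℤ) :
    ∑ l ∈ Finset.range q, (WW q a) ^ l = if (q:ℤ) ∣ a then (q:ℂ) else 0 := by
  by_cases h : (q:ℤ) ∣ a
  · rw [if_pos h, (WW_eq_one_iff q hq a).mpr h]
    simp
  · rw [if_neg h]
    exact geom_WW q hq q a ⟨a, by ring⟩ h

lemma Gm_mul_conj (p : ℤ) (q : ℕ) (hq : 1 ≤ q) (n : ℤ) :
    Gm p q n * (starRingEnd ℂ) (Gm p q n)
      = ∑ d ∈ Finset.range q, (WW q (-p*(d:ℤ)^2 + n*(d:ℤ)) *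
          ∑ l ∈ Finset.range q, (WW q (-(2*p)*(d:ℤ))) ^ l) := by
  rw [Gm_eq_sum_WW, map_sum, Finset.sum_mul_sum]
  calc (∑ k ∈ Finset.range q, ∑ l ∈ Finset.range q,
          WW q (-p*(k:ℤ)^2 + n*(k:ℤ)) * (starRingEnd ℂ) (WW q (-p*(l:ℤ)^2 + n*(l:ℤ))))
      = ∑ l ∈ Finset.range q, ∑ k ∈ Finset.range q,
          WW q ((-p*(k:ℤ)^2 + n*(k:ℤ)) + -(-p*(l:ℤ)^2 + n*(l:ℤ))) := by
        rw [Finset.sum_comm]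
        exact Finset.sum_congr rfl fun l _ => Finset.sum_congr rfl fun k _ => by
          rw [conj_WW, ← WW_add]
    _ = ∑ l ∈ Finset.range q, ∑ d ∈ Finset.range q,
          WW q ((-p*(d:ℤ)^2 + n*(d:ℤ)) + (-(2*p)*(d:ℤ))*(l:ℤ)) := by
        refine Finset.sum_congr rfl fun l _ => ?_
        rw [← sum_shift q (fun k : ℕ =>
          WW q ((-p*(k:ℤ)^2 + n*(k:ℤ)) + -(-p*(l:ℤ)^2 + n*(l:ℤ)))) (fun k => by
            apply WW_congr q hq
            push_cast
            exact ⟨-p*(2*k+q) + n, by ring⟩) l]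
        exact Finset.sum_congr rfl fun d _ => congrArg (WW q) (by push_cast; ring)
    _ = _ := by
        rw [Finset.sum_comm]
        refine Finset.sum_congr rfl fun d _ => ?_
        rw [Finset.mul_sum]
        exact Finset.sum_congr rfl fun l _ => by rw [WW_add, ← WW_pow]

lemma Gm_ne_zero_odd (p : ℤ) (q : ℕ) (hq : 1 ≤ q) (hodd : Odd q)
    (hpq : Int.gcd p (q:ℤ) = 1) (n : ℤ) : Gm p q n ≠ 0 := by
  have hco2 : IsCoprime (2:ℤ) (q:ℤ) := by
    rw [Int.isCoprime_iff_gcd_eq_one]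
    have : Nat.Coprime 2 q := (Nat.prime_two.coprime_iff_not_dvd).mpr
      (by intro h; obtain ⟨k, hk⟩ := hodd; omega)
    simpa [Int.gcd] using this
  have hco : IsCoprime ((2*p):ℤ) (q:ℤ) :=
    IsCoprime.mul_left hco2 (Int.isCoprime_iff_gcd_eq_one.mpr hpq)
  have key : Gm p q n * (starRingEnd ℂ) (Gm p q n) = (q:ℂ) := by
    rw [Gm_mul_conj p q hq n]
    rw [Finset.sum_congr rfl (fun d _ => by rw [geom_full q hq])]
    rw [Finset.sum_eq_single 0]
    · simp [WW_zero]
    · intro d hd hd0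
      have hdlt : d < q := Finset.mem_range.mp hd
      have hnd : ¬ (q:ℤ) ∣ (-(2*p)*(d:ℤ)) := by
        intro hdvd
        rw [neg_mul, dvd_neg] at hdvd
        have : (q:ℤ) ∣ (d:ℤ) := hco.symm.dvd_of_dvd_mul_left hdvd
        have : q ∣ d := by exact_mod_cast this
        exact hd0 (Nat.eq_zero_of_dvd_of_lt this hdlt)
      rw [if_neg hnd, mul_zero]
    · intro h
      exact absurd (Finset.mem_range.mpr (by omega)) h
  intro h0
  rw [h0, zero_mul] at key
  exact (Nat.cast_ne_zero.mpr (by omega : q ≠ 0) : (q:ℂ) ≠ 0) key.symm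

lemma Gm_ne_zero_even (p : ℤ) (q r : ℕ) (hq2 : q = 2*r) (hr : 1 ≤ r)
    (hpq : Int.gcd p (q:ℤ) = 1) (n : ℤ) (hadm : (2:ℤ) ∣ (n - p*(r:ℤ))) :
    Gm p q n ≠ 0 := by
  have hq : 1 ≤ q := by omega
  have hcop : IsCoprime (p:ℤ) ((r:ℕ):ℤ) := by
    refine IsCoprime.of_isCoprime_of_dvd_right (Int.isCoprime_iff_gcd_eq_one.mpr hpq) ?_
    exact ⟨2, by push_cast [hq2]; ring⟩
  have key : Gm p q n * (starRingEnd ℂ) (Gm p q n) = 2*(q:ℂ) := by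
    rw [Gm_mul_conj p q hq n]
    rw [Finset.sum_congr rfl (fun d _ => by rw [geom_full q hq])]
    have hsub : ({0, r} : Finset ℕ) ⊆ Finset.range q := by
      intro d hd
      rcases Finset.mem_insert.mp hd with rfl | hd
      · exact Finset.mem_range.mpr (by omega)
      · rw [Finset.mem_singleton] at hd
        subst hd
        exact Finset.mem_range.mpr (by omega)
    rw [← Finset.sum_subset hsub ?hzero]
    case hzero =>
      intro d hd hdnot
      have hd0 : d ≠ 0 := fun h => hdnot (by simp [h])
      have hdr : d ≠ r := fun h => hdnot (by simp [h])
      have hdlt : d < q := Finset.mem_range.mp hd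
      have hnd : ¬ (q:ℤ) ∣ (-(2*p)*(d:ℤ)) := by
        intro hdvd
        rw [neg_mul, dvd_neg] at hdvd
        -- 2r ∣ 2pd ⇒ r ∣ pd ⇒ r ∣ d
        obtain ⟨k, hk⟩ := hdvd
        have hrpd : (r:ℤ) ∣ p*(d:ℤ) := ⟨k, by
          have : (2:ℤ) * (p*(d:ℤ)) = 2 * ((r:ℤ)*k) := by push_cast [hq2] at hk ⊢; linarith
          exact mul_left_cancel₀ (two_ne_zero) this⟩
        have hrd : (r:ℤ) ∣ (d:ℤ) := hcop.symm.dvd_of_dvd_mul_left hrpd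
        have : r ∣ d := by exact_mod_cast hrd
        obtain ⟨c, hc⟩ := this
        match c, hc with
        | 0, hc => omega
        | 1, hc => omega
        | (c+2), hc =>
          have : 2*r ≤ d := by rw [hc]; nlinarith
          omega
      rw [if_neg hnd, mul_zero]
    rw [Finset.sum_pair (by omega : (0:ℕ) ≠ r)]
    have h0 : (if (q:ℤ) ∣ (-(2*p)*((0:ℕ):ℤ)) then (q:ℂ) else 0) = (q:ℂ) := by
      rw [if_pos (by simp)]
    have hrterm : WW q (-p*((r:ℕ):ℤ)^2 + n*((r:ℕ):ℤ)) = 1 := by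
      apply (WW_eq_one_iff q hq _).mpr
      obtain ⟨c, hc⟩ := hadm
      exact ⟨c, by push_cast [hq2]; linear_combination (r:ℤ) * hc⟩
    have hr2 : (if (q:ℤ) ∣ (-(2*p)*((r:ℕ):ℤ)) then (q:ℂ) else 0) = (q:ℂ) := by
      rw [if_pos ⟨-p, by push_cast [hq2]; ring⟩]
    rw [h0, hrterm, hr2]
    simp [WW_zero]
    ring
  intro h0
  rw [h0, zero_mul] at key
  have : (2*(q:ℂ)) ≠ 0 := by
    apply mul_ne_zero two_ne_zero
    exact Nat.cast_ne_zero.mpr (by omega)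
  exact this key.symm

lemma arg_exp_transfer (z w' : ℂ) (c : ℂ) (h : z = c * w') (hc : ‖c‖ = 1)
    (hw : w' ≠ 0) :
    Complex.exp (z.arg * Complex.I) = c * Complex.exp (w'.arg * Complex.I) := by
  have hcne : c ≠ 0 := by
    intro h0; rw [h0] at hc; simp at hc
  have hz : z ≠ 0 := by rw [h]; exact mul_ne_zero hcne hw
  have habs : (‖z‖ : ℝ) = ‖w'‖ := by rw [h, norm_mul, hc, one_mul]
  have hza : ((‖z‖ : ℝ) : ℂ) ≠ 0 := by
    simpa using (norm_ne_zero_iff.mpr hz)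
  have hwa : ((‖w'‖ : ℝ) : ℂ) ≠ 0 := by
    simpa using (norm_ne_zero_iff.mpr hw)
  have f1 : Complex.exp (z.arg * Complex.I) = z / ((‖z‖ : ℝ) : ℂ) := by
    rw [eq_div_iff hza, mul_comm]
    exact Complex.norm_mul_exp_arg_mul_I z
  have f2 : Complex.exp (w'.arg * Complex.I) = w' / ((‖w'‖ : ℝ) : ℂ) := by
    rw [eq_div_iff hwa, mul_comm]
    exact Complex.norm_mul_exp_arg_mul_I w'
  rw [f1, f2, habs, h]
  ring

lemma Mmat_eq_Mc (φ : ℝ) : Mmat φ = Mc (Complex.exp ((φ:ℂ) * Complex.I)) := by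
  rw [Mmat, Mc, ← Complex.exp_neg]
  congr 2
  ring

lemma admList_odd (q : ℕ) (hodd : Odd q) : admList q = List.range q := by
  rw [admList]
  apply List.filter_eq_self.mpr
  intro n _
  simp only [decide_eq_true_eq]
  intro hdvd
  obtain ⟨k, hk⟩ := hodd
  obtain ⟨c, hc⟩ := hdvd
  omega

lemma admList_even (q r : ℕ) (hq2 : q = 2*r) (hr : 1 ≤ r) :
    admList q = (List.range r).map (fun m => r % 2 + 2*m) := by
  have nd1 : (admList q).Nodup := (List.nodup_range (n := q)).filter _
  have nd2 : ((List.range r).map (fun m => r % 2 + 2*m)).Nodup :=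
    (List.nodup_range (n := r)).map (fun a b h => by omega)
  have s1 : List.Pairwise (· ≤ ·) (admList q) :=
    List.Pairwise.filter _ ((List.pairwise_lt_range (n := q)).imp (fun h => le_of_lt h))
  have s2 : List.Pairwise (· ≤ ·) ((List.range r).map (fun m => r % 2 + 2*m)) := by
    rw [List.pairwise_map]
    exact ((List.pairwise_lt_range (n := r)).imp (fun h => by omega))
  refine List.Perm.eq_of_pairwise' s1 s2 ((List.perm_ext_iff_of_nodup nd1 nd2).mpr ?_)
  · intro a
    simp only [admList, List.mem_filter, List.mem_range, List.mem_map, decide_eq_true_eq, Adm, hq2]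
    constructor
    · rintro ⟨h1, h2⟩
      refine ⟨(a - r % 2)/2, by omega, by omega⟩
    · rintro ⟨m, hm, rfl⟩
      refine ⟨by omega, ?_⟩
      rintro ⟨c, hc⟩
      omega


theorem stmt0 (p : ℤ) (q : ℕ) (hq : 1 ≤ q) (hpq : Int.gcd p (q : ℤ) = 1) (α : ℝ) :
    (Odd q →
      (1 / 2 : ℂ) * Matrix.trace
        (((admList q).reverse.map (fun n =>
          (Real.cos α : ℂ) • (1 : Matrix (Fin 2) (Fin 2) ℂ)
            + (Complex.I * (Real.sin α : ℂ)) • Mmat (theta p q n))).prod)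
        = (Real.cos α : ℂ) ^ q) ∧
    (Even q →
      (1 / 2 : ℂ) * Matrix.trace
        (((admList q).reverse.map (fun n =>
          (Real.cos α : ℂ) • (1 : Matrix (Fin 2) (Fin 2) ℂ)
            + (Complex.I * (Real.sin α : ℂ)) • Mmat (theta p q n))).prod)
        = (Real.cos α : ℂ) ^ (q / 2)) := by
  have hq0 : (0:ℤ) < (q:ℤ) := by exact_mod_cast hq
  constructor
  · -- odd case
    intro hodd
    have hlist : admList q = List.range q := admList_odd q hodd
    have hco2 : IsCoprime (2:ℤ) (q:ℤ) := by
      rw [Int.isCoprime_iff_gcd_eq_one]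
      have h2 : Nat.Coprime 2 q := (Nat.prime_two.coprime_iff_not_dvd).mpr
        (by intro h; obtain ⟨k, hk⟩ := hodd; omega)
      simpa [Int.gcd] using h2
    have hco : IsCoprime ((2*p):ℤ) (q:ℤ) :=
      IsCoprime.mul_left hco2 (Int.isCoprime_iff_gcd_eq_one.mpr hpq)
    obtain ⟨b, v, hbv⟩ := hco
    set bn : ℕ := (b % (q:ℤ)).toNat with hbn
    have hbq : (bn:ℤ) = b % (q:ℤ) := Int.toNat_of_nonneg (Int.emod_nonneg b (by omega))
    have hbinv : (q:ℤ) ∣ 2*p*(bn:ℤ) - 1 := by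
      have hd1 : (q:ℤ) ∣ 2*p*b - 1 := ⟨-v, by linear_combination hbv⟩
      have hd2 : (q:ℤ) ∣ ((bn:ℤ) - b) := by
        rw [hbq, Int.emod_def]
        exact ⟨-(b / (q:ℤ)), by ring⟩
      have heq : 2*p*(bn:ℤ) - 1 = (2*p*b - 1) + (2*p)*((bn:ℤ) - b) := by ring
      rw [heq]
      exact dvd_add hd1 (hd2.mul_left _)
    have hG0 : Gm p q ((0:ℕ):ℤ) ≠ 0 := Gm_ne_zero_odd p q hq hodd hpq _
    set A : ℤ := p * (bn:ℤ)^2 with hA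
    set z₀ : ℂ := Complex.exp ((theta p q 0 : ℝ) * Complex.I) with hz
    have hphase : ∀ m : ℕ, Complex.exp ((theta p q m : ℝ) * Complex.I)
        = WW q (A*(m:ℤ)^2 + 0*(m:ℤ)) * z₀ := by
      intro m
      have hGm : Gm p q ((m:ℕ):ℤ) = WW q (A*(m:ℤ)^2 + 0*(m:ℤ)) * Gm p q ((0:ℕ):ℤ) := by
        obtain ⟨k, hk⟩ := hbinv
        have h3 : ((0:ℤ) + 2*p*((bn*m : ℕ):ℤ)) = ((m:ℕ):ℤ) + (q:ℤ) * (k*(m:ℤ)) := by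
          push_cast
          linear_combination (m:ℤ) * hk
        have h4 : Gm p q ((m:ℕ):ℤ) = Gm p q ((0:ℤ) + 2*p*((bn*m:ℕ):ℤ)) := by
          rw [h3, Gm_periodic p q hq]
        rw [h4, Gm_phase p q hq 0 (bn*m)]
        have h5 : ((bn*m : ℕ):ℤ)*(0:ℤ) + p*((bn*m:ℕ):ℤ)^2 = A*(m:ℤ)^2 + 0*(m:ℤ) := by
          rw [hA]; push_cast; ring
        rw [h5]
        norm_num
      exact arg_exp_transfer _ _ _ hGm (WW_abs q _) hG0
    have hyp1 : (q:ℤ) ∣ 2*A*(q:ℤ) := ⟨2*A, by ring⟩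
    have hyp2 : (q:ℤ) ∣ A*(q:ℤ)^2 + 0*(q:ℤ) := ⟨A*(q:ℤ), by ring⟩
    have hypnd : ∀ L : ℤ, 1 ≤ L → L ≤ (q:ℤ) - 1 → ¬ (q:ℤ) ∣ 2*A*L := by
      intro L hL1 hL2 hdvd
      obtain ⟨k, hk⟩ := hbinv
      have h5 : (q:ℤ) ∣ (bn:ℤ)*L := by
        have heq : (bn:ℤ)*L = 2*A*L - (q:ℤ)*(k*(bn:ℤ)*L) := by
          rw [hA]
          linear_combination (-(bn:ℤ)*L) * hk
        rw [heq]
        exact dvd_sub hdvd ⟨k*(bn:ℤ)*L, rfl⟩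
      have h6 : (q:ℤ) ∣ L := by
        have heq : L = (2*p)*((bn:ℤ)*L) - (q:ℤ)*(k*L) := by
          linear_combination (-L) * hk
        rw [heq]
        exact dvd_sub (h5.mul_left _) ⟨k*L, rfl⟩
      obtain ⟨w, hw⟩ := h6
      rcases le_or_gt 1 w with h | h
      · nlinarith
      · have hw0 : w ≤ 0 := by omega
        nlinarith
    have hmain := main_trace q q hq hq A 0 z₀ hyp1 hyp2 hypnd
      ((Real.cos α : ℂ)) (Complex.I * (Real.sin α : ℂ))
    have hlist2 : ((admList q).reverse.map (fun n =>
          (Real.cos α : ℂ) • (1 : Matrix (Fin 2) (Fin 2) ℂ)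
            + (Complex.I * (Real.sin α : ℂ)) • Mmat (theta p q n)))
        = ((List.range q).reverse.map (fun m : ℕ =>
          (Real.cos α : ℂ) • (1 : Mat2)
            + (Complex.I * (Real.sin α : ℂ)) • Mc (WW q (A*(m:ℤ)^2+0*(m:ℤ)) * z₀))) := by
      rw [hlist]
      apply List.map_congr_left
      intro m _
      rw [Mmat_eq_Mc, hphase m]
    rw [hlist2, hmain]
    ring
  · -- even case
    intro heven
    obtain ⟨r', hr'⟩ := heven
    set r : ℕ := q / 2 with hrdef
    have hq2' : q = 2*r := by omega
    have hr : 1 ≤ r := by omega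
    have hlist : admList q = (List.range r).map (fun m => r % 2 + 2*m) :=
      admList_even q r hq2' hr
    have hr0 : (0:ℤ) < (r:ℤ) := by exact_mod_cast hr
    have hpodd : Odd p := by
      rcases Int.even_or_odd p with he | ho
      · exfalso
        obtain ⟨t, ht⟩ := he
        have h2 : (2:ℤ) ∣ (Int.gcd p (q:ℤ) : ℤ) :=
          Int.dvd_coe_gcd ⟨t, by omega⟩ ⟨(r:ℤ), by push_cast [hq2']; ring⟩
        rw [hpq] at h2
        norm_num at h2
      · exact ho
    have hcop : IsCoprime (p:ℤ) ((r:ℕ):ℤ) :=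
      IsCoprime.of_isCoprime_of_dvd_right (Int.isCoprime_iff_gcd_eq_one.mpr hpq)
        ⟨2, by push_cast [hq2']; ring⟩
    obtain ⟨c, v, hcv⟩ := hcop
    set cn : ℕ := (c % (r:ℤ)).toNat with hcn
    have hcq : (cn:ℤ) = c % (r:ℤ) := Int.toNat_of_nonneg (Int.emod_nonneg c (by omega))
    have hcinv : (r:ℤ) ∣ p*(cn:ℤ) - 1 := by
      have hd1 : (r:ℤ) ∣ p*c - 1 := ⟨-v, by linear_combination hcv⟩
      have hd2 : (r:ℤ) ∣ ((cn:ℤ) - c) := by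
        rw [hcq, Int.emod_def]
        exact ⟨-(c / (r:ℤ)), by ring⟩
      have heq : p*(cn:ℤ) - 1 = (p*c - 1) + p*((cn:ℤ) - c) := by ring
      rw [heq]
      exact dvd_add hd1 (hd2.mul_left _)
    set e₀ : ℕ := r % 2 with he₀
    have hGe : Gm p q ((e₀:ℕ):ℤ) ≠ 0 := by
      apply Gm_ne_zero_even p q r hq2' hr hpq
      obtain ⟨a, ha⟩ := hpodd
      set X : ℤ := a*(r:ℤ) with hX
      have heq : ((e₀:ℕ):ℤ) - p*(r:ℤ) = (e₀:ℤ) - 2*X - (r:ℤ) := by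
        rw [ha, hX]; ring
      rw [heq]
      have he2 : (e₀:ℤ) = ((r % 2 : ℕ):ℤ) := by rw [he₀]
      omega
    set A : ℤ := p*(cn:ℤ)^2 with hA
    set B : ℤ := (cn:ℤ)*(e₀:ℤ) with hB
    set z₀ : ℂ := Complex.exp ((theta p q e₀ : ℝ) * Complex.I) with hz
    have hphase : ∀ m : ℕ, Complex.exp ((theta p q (e₀ + 2*m) : ℝ) * Complex.I)
        = WW q (A*(m:ℤ)^2 + B*(m:ℤ)) * z₀ := by
      intro m
      have hGm : Gm p q ((e₀ + 2*m : ℕ):ℤ)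
          = WW q (A*(m:ℤ)^2 + B*(m:ℤ)) * Gm p q ((e₀:ℕ):ℤ) := by
        obtain ⟨k, hk⟩ := hcinv
        have h3 : (((e₀:ℕ):ℤ) + 2*p*((cn*m : ℕ):ℤ)) = ((e₀ + 2*m : ℕ):ℤ) + (q:ℤ) * (k*(m:ℤ)) := by
          push_cast [hq2']
          linear_combination 2*(m:ℤ) * hk
        have h4 : Gm p q ((e₀ + 2*m : ℕ):ℤ) = Gm p q (((e₀:ℕ):ℤ) + 2*p*((cn*m:ℕ):ℤ)) := by
          rw [h3, Gm_periodic p q hq]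
        rw [h4, Gm_phase p q hq _ (cn*m)]
        have h5 : ((cn*m : ℕ):ℤ)*((e₀:ℕ):ℤ) + p*((cn*m:ℕ):ℤ)^2 = A*(m:ℤ)^2 + B*(m:ℤ) := by
          rw [hA, hB]; push_cast; ring
        rw [h5]
      exact arg_exp_transfer _ _ _ hGm (WW_abs q _) hGe
    have hyp1 : (q:ℤ) ∣ 2*A*(r:ℤ) := ⟨p*(cn:ℤ)^2, by rw [hA]; push_cast [hq2']; ring⟩
    have hyp2 : (q:ℤ) ∣ A*(r:ℤ)^2 + B*(r:ℤ) := by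
      have hev : Even (p*(cn:ℤ)^2*(r:ℤ) + (cn:ℤ)*(e₀:ℤ)) := by
        rcases Int.even_or_odd (cn:ℤ) with hc | hc
        · obtain ⟨t, ht⟩ := hc
          have h1 : Even (p*(cn:ℤ)^2*(r:ℤ)) :=
            ⟨p*t*(cn:ℤ)*(r:ℤ), by linear_combination (p*(cn:ℤ)*(r:ℤ)) * ht⟩
          have h2 : Even ((cn:ℤ)*(e₀:ℤ)) := ⟨t*(e₀:ℤ), by linear_combination (e₀:ℤ) * ht⟩
          exact h1.add h2
        · rcases Int.even_or_odd (r:ℤ) with hre | hro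
          · obtain ⟨t, ht⟩ := hre
            have h1 : Even (p*(cn:ℤ)^2*(r:ℤ)) :=
              ⟨p*(cn:ℤ)^2*t, by linear_combination (p*(cn:ℤ)^2) * ht⟩
            have he0 : (e₀:ℤ) = 0 := by
              simp only [he₀]
              omega
            rw [he0, mul_zero, add_zero]
            exact h1
          · have h1 : Odd (p*(cn:ℤ)^2*(r:ℤ)) := (hpodd.mul (hc.pow)).mul hro
            obtain ⟨s, hs⟩ := hro
            have he1 : (e₀:ℤ) = 1 := by
              simp only [he₀]
              omega
            have h2 : Odd ((cn:ℤ)*(e₀:ℤ)) := by rw [he1, mul_one]; exact hc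
            exact h1.add_odd h2
      obtain ⟨w, hw⟩ := hev
      exact ⟨w, by rw [hA, hB]; push_cast [hq2']; linear_combination (r:ℤ) * hw⟩
    have hypnd : ∀ L : ℤ, 1 ≤ L → L ≤ (r:ℤ) - 1 → ¬ (q:ℤ) ∣ 2*A*L := by
      intro L hL1 hL2 hdvd
      obtain ⟨k, hk⟩ := hdvd
      have hk' : p*(cn:ℤ)^2*L = (r:ℤ)*k := by
        have h2 : (2:ℤ) * (p*(cn:ℤ)^2*L) = 2 * ((r:ℤ)*k) := by
          rw [hA] at hk
          push_cast [hq2'] at hk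
          linarith
        exact mul_left_cancel₀ two_ne_zero h2
      obtain ⟨k2, hk2⟩ := hcinv
      have h5 : (r:ℤ) ∣ (cn:ℤ)*L := by
        have heq : (cn:ℤ)*L = (p*(cn:ℤ)^2*L) - (r:ℤ)*(k2*(cn:ℤ)*L) := by
          linear_combination (-(cn:ℤ)*L) * hk2
        rw [heq, hk']
        exact dvd_sub ⟨k, rfl⟩ ⟨k2*(cn:ℤ)*L, rfl⟩
      have h6 : (r:ℤ) ∣ L := by
        have heq : L = p*((cn:ℤ)*L) - (r:ℤ)*(k2*L) := by
          linear_combination (-L) * hk2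
        rw [heq]
        exact dvd_sub (h5.mul_left _) ⟨k2*L, rfl⟩
      obtain ⟨w, hw⟩ := h6
      rcases le_or_gt 1 w with h | h
      · nlinarith
      · have hw0 : w ≤ 0 := by omega
        nlinarith
    have hmain := main_trace q r hq hr A B z₀ hyp1 hyp2 hypnd
      ((Real.cos α : ℂ)) (Complex.I * (Real.sin α : ℂ))
    have hlist2 : ((admList q).reverse.map (fun n =>
          (Real.cos α : ℂ) • (1 : Matrix (Fin 2) (Fin 2) ℂ)
            + (Complex.I * (Real.sin α : ℂ)) • Mmat (theta p q n)))
        = ((List.range r).reverse.map (fun m : ℕ =>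
          (Real.cos α : ℂ) • (1 : Mat2)
            + (Complex.I * (Real.sin α : ℂ)) • Mc (WW q (A*(m:ℤ)^2+B*(m:ℤ)) * z₀))) := by
      rw [hlist, ← List.map_reverse, List.map_map]
      apply List.map_congr_left
      intro m _
      simp only [Function.comp_apply]
      rw [Mmat_eq_Mc, hphase m]
    rw [hlist2, hmain, hrdef]
    ring
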